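/- If • and * are binary operations on a set X such that (X,•) and (X,*) are both locally-zero groupoids, then their product (X,□), where x □ y := (x • y) * (y • x), is also a locally-zero groupoid; hence the locally-zero groupoids on X form a subsemigroup of (Bin(X), □). -/
import Mathlib


/-- The product of two binary operations on `X`: `x □ y := (x • y) * (y • x)`. -/
def box {X : Type*} (f g : X → X → X) : X → X → X :=
  fun x y => g (f x y) (f y x)

/-- A groupoid is locally-zero if it is idempotent and its restriction to every pair of
distinct elements is either a left-zero-semigroup or a right-zero-semigroup. -/
def LocallyZero {X : Type*} (bullet : X → X → X) : Prop :=
  (∀ x : X, bullet x x = x) ∧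
  ∀ x y : X, x ≠ y →
    (bullet x y = x ∧ bullet y x = y) ∨ (bullet x y = y ∧ bullet y x = x)

/-- The product of two locally-zero groupoids is locally-zero: the locally-zero
groupoids form a subsemigroup of `(Bin(X), □)`. -/
theorem box_locallyZero {X : Type*} (bullet star : X → X → X)
    (hb : LocallyZero bullet) (hs : LocallyZero star) :
    LocallyZero (box bullet star) := by
  obtain ⟨hb1, hb2⟩ := hb
  obtain ⟨hs1, hs2⟩ := hs
  constructor
  · intro x; simp [box, hb1, hs1]
  · intro x y hxy
    rcases hb2 x y hxy with ⟨h1, h2⟩ | ⟨h1, h2⟩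
    · rcases hs2 x y hxy with ⟨h3, h4⟩ | ⟨h3, h4⟩
      · left; simp [box, h1, h2, h3, h4]
      · right; simp [box, h1, h2, h3, h4]
    · rcases hs2 y x hxy.symm with ⟨h3, h4⟩ | ⟨h3, h4⟩
      · right; simp [box, h1, h2, h3, h4]
      · left; simp [box, h1, h2, h3, h4]
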